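/- arXiv:2401.03574 — 2 statements merged into one kernel-verified Lean document; each statement's English description precedes it below -/
import Mathlib

section
/- Let k be a field with char k ≠ p such that k* = (k*)^p. For r ≥ 1 define F_r = ⋃_{m≥0} k((x₁^{1/p^m}, …, x_r^{1/p^m})) (the union of iterated Laurent series fields). Then F_r* is p-divisible. -/
namespace AmitsurNote

noncomputable instance instLinOrdLexPi (r : ℕ) : LinearOrder (Lex (Fin r → ℤ)) :=
  letI : WellFoundedLT (Fin r) := inferInstance
  inferInstance

noncomputable instance instLOACGLexPi (r : ℕ) : IsOrderedAddMonoid (Lex (Fin r → ℤ)) :=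
  inferInstance

/-- The iterated Laurent series field `k((x₁,…,x_r))`, realized as the field of
Hahn series over the lexicographically ordered group `ℤ^r`. -/
def IterLaurent (k : Type) [Field k] (r : ℕ) : Type := HahnSeries (Lex (Fin r → ℤ)) k

noncomputable instance (k : Type) [Field k] (r : ℕ) : Field (IterLaurent k r) :=
  inferInstanceAs (Field (HahnSeries (Lex (Fin r → ℤ)) k))

/-- Multiplication of all exponents by `n`. -/
def expMulHom (r n : ℕ) : Lex (Fin r → ℤ) →+ Lex (Fin r → ℤ) where
  toFun a := toLex fun i => (n : ℤ) * ofLex a i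
  map_zero' := congrArg toLex (funext fun i => mul_zero _)
  map_add' a b := congrArg toLex (funext fun i => mul_add _ _ _)

lemma expMulHom_injective (r n : ℕ) (hn : 0 < n) : Function.Injective (expMulHom r n) := by
  intro a b h
  apply ofLex.injective
  funext i
  have := congrFun (congrArg ofLex h) i
  simp only [expMulHom, AddMonoidHom.coe_mk, ZeroHom.coe_mk] at this
  exact mul_left_cancel₀ (by exact_mod_cast hn.ne' : (n : ℤ) ≠ 0) this

lemma expMulHom_strictMono (r n : ℕ) (hn : 0 < n) : StrictMono (expMulHom r n) := by
  intro a b h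
  obtain ⟨i, h1, h2⟩ := h
  refine ⟨i, fun j hj => ?_, ?_⟩
  · show (n : ℤ) * ofLex a j = (n : ℤ) * ofLex b j
    rw [show ofLex a j = ofLex b j from h1 j hj]
  · exact mul_lt_mul_of_pos_left h2 (by simpa using hn)

lemma expMulHom_le (r n : ℕ) (hn : 0 < n) :
    ∀ a b : Lex (Fin r → ℤ), expMulHom r n a ≤ expMulHom r n b ↔ a ≤ b :=
  fun _ _ => (expMulHom_strictMono r n hn).le_iff_le

/-- The ring embedding `k((x₁,…,x_r)) → k((x₁,…,x_r))` sending each variable `xᵢ` to `xᵢⁿ`. -/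
noncomputable def Phi (k : Type) [Field k] (r n : ℕ) (hn : 0 < n) :
    IterLaurent k r →+* IterLaurent k r :=
  HahnSeries.embDomainRingHom (expMulHom r n) (expMulHom_injective r n hn) (expMulHom_le r n hn)

noncomputable instance instLOCACMLexPi (r : ℕ) :
    IsOrderedCancelAddMonoid (Lex (Fin r → ℤ)) :=
  inferInstance

/-! ### Auxiliary facts: `p`-th roots of `1 + X` in power series rings (Hensel) -/

section Hensel

open PowerSeries

variable {k : Type} [Field k]

lemma mem_span_X_pow_iff (n : ℕ) (f : k⟦X⟧) :
    f ∈ (Ideal.span {(X : k⟦X⟧)}) ^ n ↔ ∀ m < n, coeff m f = 0 := by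
  rw [Ideal.span_singleton_pow, Ideal.mem_span_singleton]
  exact X_pow_dvd_iff

lemma psAdic : IsAdicComplete (Ideal.span {(X : k⟦X⟧)}) k⟦X⟧ where
  haus' x hx := by
    ext m
    have h := hx (m + 1)
    rw [SModEq.zero, ← Ideal.one_eq_top, smul_eq_mul, mul_one, mem_span_X_pow_iff] at h
    simpa using h m (Nat.lt_succ_self m)
  prec' f hf := by
    refine ⟨PowerSeries.mk fun m => coeff m (f (m + 1)), fun n => ?_⟩
    rw [SModEq.sub_mem, ← Ideal.one_eq_top, smul_eq_mul, mul_one, mem_span_X_pow_iff]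
    intro m hm
    have h := hf (Nat.succ_le_of_lt hm)
    rw [SModEq.sub_mem, ← Ideal.one_eq_top, smul_eq_mul, mul_one, mem_span_X_pow_iff] at h
    have h2 := h m (Nat.lt_succ_self m)
    rw [map_sub] at h2 ⊢
    rw [coeff_mk]
    rw [sub_eq_zero] at h2 ⊢
    rw [← h2]

lemma exists_pth_root_one_add_X (p : ℕ) (hp : p ≠ 0) (hpk : (p : k) ≠ 0) :
    ∃ S : k⟦X⟧, S ^ p = 1 + X := by
  haveI := psAdic (k := k)
  haveI : HenselianRing k⟦X⟧ (Ideal.span {(X : k⟦X⟧)}) := inferInstance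
  have hmonic : (Polynomial.X ^ p - Polynomial.C (1 + X : k⟦X⟧)).Monic :=
    Polynomial.monic_X_pow_sub_C _ hp
  have heval : (Polynomial.X ^ p - Polynomial.C (1 + X : k⟦X⟧)).eval 1 ∈
      Ideal.span {(X : k⟦X⟧)} := by
    simp only [Polynomial.eval_sub, Polynomial.eval_pow, Polynomial.eval_X, Polynomial.eval_C,
      one_pow]
    have : (1 : k⟦X⟧) - (1 + X) = -X := by ring
    rw [this]
    exact neg_mem (Ideal.subset_span rfl)
  have hunit : IsUnit (Ideal.Quotient.mk (Ideal.span {(X : k⟦X⟧)})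
      ((Polynomial.X ^ p - Polynomial.C (1 + X : k⟦X⟧)).derivative.eval 1)) := by
    have hd : (Polynomial.X ^ p - Polynomial.C (1 + X : k⟦X⟧)).derivative.eval 1 = (p : k⟦X⟧) := by
      simp [Polynomial.derivative_X_pow]
    rw [hd]
    have : IsUnit (p : k⟦X⟧) := by
      rw [isUnit_iff_constantCoeff]
      simp only [map_natCast]
      exact isUnit_iff_ne_zero.mpr hpk
    exact this.map _
  obtain ⟨a, ha, -⟩ := HenselianRing.is_henselian (Polynomial.X ^ p - Polynomial.C (1 + X : k⟦X⟧))
    hmonic 1 heval hunit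
  refine ⟨a, ?_⟩
  have := ha
  simp only [Polynomial.IsRoot, Polynomial.eval_sub, Polynomial.eval_pow, Polynomial.eval_X,
    Polynomial.eval_C, sub_eq_zero] at this
  exact this

end Hensel

/-! ### A regrouping lemma for finite sums over `ℕ × ℕ` -/

lemma finsum_nat_prod {M : Type*} [AddCommMonoid M] (F : ℕ × ℕ → M)
    (hF : (Function.support F).Finite) :
    ∑ᶠ ij : ℕ × ℕ, F ij = ∑ᶠ n : ℕ, ∑ ij ∈ Finset.HasAntidiagonal.antidiagonal n, F ij := by
  classical
  set T := hF.toFinset with hT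
  have hN : (Function.support fun n => ∑ ij ∈ Finset.HasAntidiagonal.antidiagonal n, F ij) ⊆
      ↑(T.image fun ij : ℕ × ℕ => ij.1 + ij.2) := by
    intro n hn
    obtain ⟨ij, hij, hne⟩ := Finset.exists_ne_zero_of_sum_ne_zero hn
    exact Finset.mem_coe.2 (Finset.mem_image.2
      ⟨ij, hF.mem_toFinset.2 hne, Finset.HasAntidiagonal.mem_antidiagonal.1 hij⟩)
  rw [finsum_eq_sum_of_support_subset _ hN]
  have hdisj : ((T.image fun ij : ℕ × ℕ => ij.1 + ij.2 : Finset ℕ) : Set ℕ).PairwiseDisjoint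
      Finset.HasAntidiagonal.antidiagonal := by
    intro m _ n _ hmn
    refine Finset.disjoint_left.2 fun ij h1 h2 => hmn ?_
    rw [← Finset.HasAntidiagonal.mem_antidiagonal.1 h1, ← Finset.HasAntidiagonal.mem_antidiagonal.1 h2]
  rw [← Finset.sum_biUnion hdisj]
  rw [finsum_eq_sum_of_support_subset F (s := (T.image fun ij : ℕ × ℕ => ij.1 + ij.2).biUnion
    Finset.HasAntidiagonal.antidiagonal) ?_]
  intro ij hij
  have hT' : ij ∈ T := hF.mem_toFinset.2 hij
  exact Finset.mem_coe.2 (Finset.mem_biUnion.2 ⟨ij.1 + ij.2,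
    Finset.mem_image.2 ⟨ij, hT', rfl⟩, Finset.HasAntidiagonal.mem_antidiagonal.2 rfl⟩)

/-! ### Substitution of a Hahn series of positive order into a formal power series -/

namespace PsiAux

open HahnSeries

variable {Γ : Type*} [AddCommMonoid Γ] [LinearOrder Γ] [IsOrderedCancelAddMonoid Γ] {k : Type} [Field k]

/-- The summable family `n ↦ c n • v ^ n`. -/
noncomputable def smulFam (v : HahnSeries Γ k) (hv : 0 < v.orderTop) (c : ℕ → k) :
    SummableFamily Γ k ℕ where
  toFun n := c n • v ^ n
  isPWO_iUnion_support' := by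
    refine (SummableFamily.isPWO_iUnion_support_powers (HahnSeries.zero_le_orderTop_iff.mp hv.le)).mono (Set.iUnion_mono fun n => ?_)
    intro g hg
    simp only [HahnSeries.mem_support, HahnSeries.coeff_smul, smul_eq_mul] at hg ⊢
    exact right_ne_zero_of_mul hg
  finite_co_support' g := by
    refine ((SummableFamily.powers v).finite_co_support' g).subset fun n hn => ?_
    simp only [Set.mem_setOf_eq, HahnSeries.coeff_smul, smul_eq_mul] at hn
    show ((SummableFamily.powers v) n).coeff g ≠ 0
    simp only [SummableFamily.powers_of_orderTop_pos hv]
    exact right_ne_zero_of_mul hn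

@[simp] lemma smulFam_apply (v : HahnSeries Γ k) (hv : 0 < v.orderTop) (c : ℕ → k) (n : ℕ) :
    smulFam v hv c n = c n • v ^ n := rfl

variable (v : HahnSeries Γ k) (hv : 0 < v.orderTop)

/-- Substitution of `v` into a power series. -/
noncomputable def psi (f : PowerSeries k) : HahnSeries Γ k :=
  (smulFam v hv fun n => PowerSeries.coeff n f).hsum

lemma psi_coeff (f : PowerSeries k) (g : Γ) :
    (psi v hv f).coeff g = ∑ᶠ n : ℕ, PowerSeries.coeff n f * (v ^ n).coeff g := by
  rw [psi, SummableFamily.coeff_hsum]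
  simp only [smulFam_apply, HahnSeries.coeff_smul, smul_eq_mul]

lemma psi_one : psi v hv 1 = 1 := by
  ext g
  rw [psi_coeff]
  rw [finsum_eq_single _ 0 (fun n hn => by
    simp [PowerSeries.coeff_one, hn])]
  simp

lemma psi_one_add_X : psi v hv (1 + PowerSeries.X) = 1 + v := by
  ext g
  rw [psi_coeff]
  rw [finsum_eq_sum_of_support_subset _ (s := ({0, 1} : Finset ℕ)) ?_]
  · rw [Finset.sum_pair (by norm_num)]
    simp [PowerSeries.coeff_one, PowerSeries.coeff_X]
  · intro n hn
    simp only [Function.mem_support, map_add, PowerSeries.coeff_one, PowerSeries.coeff_X] at hn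
    by_contra h
    simp only [Finset.coe_insert, Set.mem_insert_iff, Finset.coe_singleton,
      Set.mem_singleton_iff, not_or] at h
    rw [if_neg h.1, if_neg h.2] at hn
    simp at hn

lemma psi_mul (f g : PowerSeries k) : psi v hv (f * g) = psi v hv f * psi v hv g := by
  classical
  set a : ℕ → k := fun n => PowerSeries.coeff n f with ha
  set b : ℕ → k := fun n => PowerSeries.coeff n g with hb
  have hmul : psi v hv f * psi v hv g =
      (SummableFamily.smul (smulFam v hv a) (smulFam v hv b)).hsum := by
    rw [SummableFamily.smul_hsum, HahnSeries.of_symm_smul_of_eq_mul]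
    rfl
  have hterm : ∀ ij : ℕ × ℕ,
      (SummableFamily.smul (smulFam v hv a) (smulFam v hv b)) ij =
        (a ij.1 * b ij.2) • v ^ (ij.1 + ij.2) := by
    intro ij
    show (HahnModule.of k).symm (smulFam v hv a ij.1 • (HahnModule.of k) (smulFam v hv b ij.2)) = _
    rw [HahnSeries.of_symm_smul_of_eq_mul, smulFam_apply, smulFam_apply, smul_mul_assoc,
      mul_smul_comm, smul_smul, _root_.pow_add]
  ext γ
  rw [hmul, SummableFamily.coeff_hsum]
  have hre : ∀ ij : ℕ × ℕ,
      ((SummableFamily.smul (smulFam v hv a) (smulFam v hv b)) ij).coeff γ =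
        a ij.1 * b ij.2 * (v ^ (ij.1 + ij.2)).coeff γ := by
    intro ij
    rw [hterm ij, HahnSeries.coeff_smul, smul_eq_mul]
  simp only [hre]
  have hFfin : (Function.support fun ij : ℕ × ℕ =>
      a ij.1 * b ij.2 * (v ^ (ij.1 + ij.2)).coeff γ).Finite := by
    refine ((SummableFamily.smul (smulFam v hv a) (smulFam v hv b)).finite_co_support'
      γ).subset fun ij hij => ?_
    simp only [Function.mem_support] at hij
    show (((SummableFamily.smul (smulFam v hv a) (smulFam v hv b))) ij).coeff γ ≠ 0
    rw [hre ij]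
    exact hij
  rw [finsum_nat_prod _ hFfin, psi_coeff]
  refine finsum_congr fun n => ?_
  rw [PowerSeries.coeff_mul, Finset.sum_mul]
  refine Finset.sum_congr rfl fun ij hij => ?_
  rw [Finset.HasAntidiagonal.mem_antidiagonal.1 hij]

lemma psi_pow (f : PowerSeries k) (n : ℕ) : psi v hv (f ^ n) = psi v hv f ^ n := by
  induction n with
  | zero => simpa using psi_one v hv
  | succ n ih => rw [pow_succ, pow_succ, psi_mul, ih]

end PsiAux

/-! ### Auxiliary facts about `Phi` -/

lemma expMulHom_eq_nsmul (r n : ℕ) (γ : Lex (Fin r → ℤ)) : expMulHom r n γ = n • γ := by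
  apply ofLex.injective
  funext i
  show (n : ℤ) * ofLex γ i = ofLex (n • γ) i
  have h : ofLex (n • γ) i = n • ofLex γ i := rfl
  rw [h, nsmul_eq_mul]

/-- The order embedding underlying `Phi`. -/
noncomputable def expEmb (r n : ℕ) (hn : 0 < n) : Lex (Fin r → ℤ) ↪o Lex (Fin r → ℤ) :=
  ⟨⟨expMulHom r n, expMulHom_injective r n hn⟩, expMulHom_le r n hn _ _⟩

/-- `Phi`, seen as a ring endomorphism of the Hahn series field. -/
noncomputable def PhiH (k : Type) [Field k] (r n : ℕ) (hn : 0 < n) :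
    HahnSeries (Lex (Fin r → ℤ)) k →+* HahnSeries (Lex (Fin r → ℤ)) k :=
  HahnSeries.embDomainRingHom (expMulHom r n) (expMulHom_injective r n hn) (expMulHom_le r n hn)

lemma PhiH_eq_Phi (k : Type) [Field k] (r n : ℕ) (hn : 0 < n)
    (x : HahnSeries (Lex (Fin r → ℤ)) k) : PhiH k r n hn x = Phi k r n hn x := rfl

lemma PhiH_apply (k : Type) [Field k] (r n : ℕ) (hn : 0 < n)
    (x : HahnSeries (Lex (Fin r → ℤ)) k) :
    PhiH k r n hn x = HahnSeries.embDomain (expEmb r n hn) x := rfl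

lemma PhiH_single (k : Type) [Field k] (r n : ℕ) (hn : 0 < n) (γ : Lex (Fin r → ℤ)) (c : k) :
    PhiH k r n hn (HahnSeries.single γ c) = HahnSeries.single (n • γ) c := by
  rw [PhiH_apply, HahnSeries.embDomain_single,
    show (expEmb r n hn) γ = n • γ from expMulHom_eq_nsmul r n γ]

lemma PhiH_orderTop_pos (k : Type) [Field k] (r n : ℕ) (hn : 0 < n)
    {u : HahnSeries (Lex (Fin r → ℤ)) k} (hu : 0 < u.orderTop) :
    0 < (PhiH k r n hn u).orderTop := by
  by_cases h : PhiH k r n hn u = 0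
  · rw [h]
    simp
  · rw [← HahnSeries.order_eq_orderTop_of_ne_zero h]
    have hco := HahnSeries.coeff_order_eq_zero.not.mpr h
    set b := (PhiH k r n hn u).order with hb
    have hmem : b ∈ (expEmb r n hn) '' u.support := by
      by_contra hc
      exact hco (by rw [PhiH_apply] at hco ⊢; exact HahnSeries.embDomain_notin_image_support hc)
    obtain ⟨a, ha, hab⟩ := hmem
    have h0a : (0 : Lex (Fin r → ℤ)) < a := by
      have h1 := HahnSeries.orderTop_le_of_coeff_ne_zero ha
      have h3 := lt_of_lt_of_le hu h1
      exact_mod_cast h3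
    have hbpos : (0 : Lex (Fin r → ℤ)) < b := by
      rw [← hab]
      have h4 : expEmb r n hn 0 = 0 := map_zero (expMulHom r n)
      rw [← h4]
      exact (expEmb r n hn).strictMono h0a
    exact_mod_cast hbpos

set_option maxHeartbeats 1000000 in
set_option synthInstance.maxHeartbeats 1000000 in
/-- Let `k` be a field with `char k ≠ p`, `k* = (k*)^p` and `ω_p ∈ k`.
Let `F_r = ⋃_{m ≥ 0} k((x₁^{1/p^m}, …, x_r^{1/p^m}))`, presented as a field `F` with
compatible embeddings `φ m : k((x₁,…,x_r)) → F` (realizing `F_{r,m}`; the compatibility maps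
each variable of `F_{r,m}` to the `p`-th power of the corresponding variable of `F_{r,m+1}`)
whose ranges cover `F`.  Then `F_r*` is `p`-divisible. -/
theorem union_iterated_laurent_p_divisible (p r : ℕ) (hp : p.Prime) (hr : 1 ≤ r)
    (k : Type) [Field k] (hchar : ringChar k ≠ p)
    (hdiv : ∀ a : k, a ≠ 0 → ∃ b : k, b ^ p = a) (ω : k) (hω : IsPrimitiveRoot ω p)
    (F : Type) [Field F] (φ : ℕ → (IterLaurent k r →+* F))
    (hcompat : ∀ m, φ m = (φ (m + 1)).comp (Phi k r p hp.pos))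
    (hcover : ∀ a : F, ∃ m f, φ m f = a) :
    ∀ a : F, a ≠ 0 → ∃ b : F, b ^ p = a := by
  intro a ha
  obtain ⟨m, f, hf⟩ := hcover a
  have hpk : (p : k) ≠ 0 := by
    intro h
    have hd := ringChar.dvd h
    rcases hp.eq_one_or_self_of_dvd _ hd with h1 | h1
    · exact CharP.ringChar_ne_one h1
    · exact hchar h1
  have hf0 : f ≠ 0 := by
    rintro rfl
    rw [map_zero] at hf
    exact ha hf.symm
  set x : HahnSeries (Lex (Fin r → ℤ)) k := f with hxdef
  have hx0 : x ≠ 0 := hf0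
  have hc : x.leadingCoeff ≠ 0 := HahnSeries.leadingCoeff_ne_zero.mpr hx0
  obtain ⟨b, hb⟩ := hdiv x.leadingCoeff hc
  have hwpos := HahnSeries.unit_aux x (inv_mul_cancel₀ hc) (-x.order) (neg_add_cancel x.order)
  set w : HahnSeries (Lex (Fin r → ℤ)) k :=
    HahnSeries.single (-x.order) (x.leadingCoeff)⁻¹ * x with hw
  set u := w - 1 with hudef
  have hupos : 0 < u.orderTop := by
    have h1 : u = -(1 - w) := by rw [hudef]; ring
    rw [h1, HahnSeries.orderTop_neg]
    exact hwpos
  have hxw : x = HahnSeries.single x.order x.leadingCoeff * w := by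
    rw [hw, ← mul_assoc, HahnSeries.single_mul_single, add_neg_cancel, mul_inv_cancel₀ hc,
      HahnSeries.single_zero_one, one_mul]
  set v : HahnSeries (Lex (Fin r → ℤ)) k := PhiH k r p hp.pos u with hvdef
  have hv : 0 < v.orderTop := PhiH_orderTop_pos k r p hp.pos hupos
  obtain ⟨S, hS⟩ := exists_pth_root_one_add_X p hp.ne_zero hpk
  set y : HahnSeries (Lex (Fin r → ℤ)) k :=
    HahnSeries.single x.order b * PsiAux.psi v hv S with hy
  have h2 : w = 1 + u := by rw [hudef]; ring
  have h1 : PhiH k r p hp.pos x =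
      HahnSeries.single (p • x.order) x.leadingCoeff * (1 + v) := by
    conv_lhs => rw [hxw]
    rw [map_mul, PhiH_single]
    congr 1
    rw [h2, map_add, map_one, hvdef]
  have hyp : y ^ p = PhiH k r p hp.pos x := by
    rw [hy, h1, mul_pow, HahnSeries.single_pow, hb, ← PsiAux.psi_pow, hS, PsiAux.psi_one_add_X]
  refine ⟨φ (m + 1) y, ?_⟩
  have hcomp : φ m f = φ (m + 1) (Phi k r p hp.pos f) := by rw [hcompat m]; rfl
  calc (φ (m + 1) y) ^ p
      = φ (m + 1) (y ^ p) := (map_pow _ _ _).symm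
    _ = φ (m + 1) (PhiH k r p hp.pos x) := congrArg _ hyp
    _ = φ (m + 1) (Phi k r p hp.pos f) := rfl
    _ = φ m f := hcomp.symm
    _ = a := hf

end AmitsurNote
end

section
/- Let Δ = Δ_{2r}(k; n₁,…,n_r) be as above, with its natural valuation v: Δ* → ℤ^{2r} (lexicographic order) and M_Δ = {g : v(g) > 0}. Then the commutator subgroup Δ*' of the unit group satisfies Δ*' ⊆ ⟨ω_m⟩ · (1 + M_Δ). -/
namespace AmitsurNote

noncomputable instance instMinLexPi (r : ℕ) : Min (Lex (Fin r → ℤ)) :=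
  (instLinOrdLexPi r).toMin

/-- An abstract model of the iterated twisted Laurent series division ring
`Δ = Δ_{2r}(k; n₁,…,n_r)` together with its natural valuation `v` with values in the
lexicographically ordered group `ℤ^{2r}`: every series is `a·x^α·(1 + d)` with `a ∈ k*`,
`α = v(f)`, and `v(d) > 0`; the monomials `x^α` multiply up to powers of the fixed root of
unity `ω = ω_m`. -/
structure TwistedLaurentValuedModel (k : Type*) [Field k] (r : ℕ) (ω : k) where
  Δ : Type*
  [instΔ : DivisionRing Δ]
  ι : k →+* Δ
  central : ∀ (a : k) (z : Δ), ι a * z = z * ι a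
  /-- the unit `ω_m` of `Δ`. -/
  ωu : Δˣ
  hωu : (ωu : Δ) = ι ω
  /-- the natural valuation of `Δ` (with junk value at `0`). -/
  v : Δ → Lex (Fin (2 * r) → ℤ)
  v_mul : ∀ x y : Δ, x ≠ 0 → y ≠ 0 → v (x * y) = v x + v y
  v_add : ∀ x y : Δ, x ≠ 0 → y ≠ 0 → x + y ≠ 0 → min (v x) (v y) ≤ v (x + y)
  v_scalar : ∀ a : k, a ≠ 0 → v (ι a) = 0
  /-- the monomial `x^α`. -/
  M : (Fin (2 * r) → ℤ) → Δˣ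
  v_M : ∀ α, v (M α) = toLex α
  M_twist : ∀ α β, ∃ e : ℤ, M α * M β = ωu ^ e * M (α + β)
  factor : ∀ u : Δˣ, ∃ (a : k) (α : Fin (2 * r) → ℤ) (d : Δ),
    (d = 0 ∨ 0 < v d) ∧ (u : Δ) = ι a * (M α : Δ) * (1 + d)

attribute [instance] TwistedLaurentValuedModel.instΔ

section Aux

variable {k : Type*} [Field k] {r : ℕ} {ω : k} (T : TwistedLaurentValuedModel k r ω)

/-- `d` is zero or has positive valuation. -/
def Pd (d : T.Δ) : Prop := d = 0 ∨ 0 < T.v d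

/-- a unit of the form `1 + d` with `d ∈ M_Δ ∪ {0}`. -/
def PS (s : T.Δˣ) : Prop := ∃ d : T.Δ, Pd T d ∧ (s : T.Δ) = 1 + d

lemma v_one : T.v 1 = 0 := by
  rw [← map_one T.ι]; exact T.v_scalar 1 one_ne_zero

lemma v_neg {d : T.Δ} (hd : d ≠ 0) : T.v (-d) = T.v d := by
  have h1 : (-d : T.Δ) = T.ι (-1) * d := by rw [map_neg, map_one, neg_one_mul]
  have h2 : T.ι (-1) ≠ 0 := by
    rw [map_neg, map_one]; exact neg_ne_zero.mpr one_ne_zero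
  rw [h1, T.v_mul _ _ h2 hd, T.v_scalar (-1) (neg_ne_zero.mpr one_ne_zero), zero_add]

lemma v_neg_one : T.v (-1) = 0 := by
  have h1 : (-1 : T.Δ) = T.ι (-1) := by rw [map_neg, map_one]
  rw [h1, T.v_scalar (-1) (neg_ne_zero.mpr one_ne_zero)]

lemma one_add_ne_zero {d : T.Δ} (hd : Pd T d) : (1 : T.Δ) + d ≠ 0 := by
  intro h
  rcases hd with hd | hd
  · rw [hd, add_zero] at h; exact one_ne_zero h
  · have hd1 : d = -1 := eq_neg_of_add_eq_zero_right h
    rw [hd1, v_neg_one T] at hd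
    exact lt_irrefl _ hd

lemma Pd_add {d₁ d₂ : T.Δ} (h₁ : Pd T d₁) (h₂ : Pd T d₂) : Pd T (d₁ + d₂) := by
  by_cases hz₁ : d₁ = 0
  · rwa [hz₁, zero_add]
  by_cases hz₂ : d₂ = 0
  · rwa [hz₂, add_zero]
  have hv₁ := h₁.resolve_left hz₁
  have hv₂ := h₂.resolve_left hz₂
  by_cases hz : d₁ + d₂ = 0
  · exact Or.inl hz
  · exact Or.inr (lt_of_lt_of_le (lt_min hv₁ hv₂) (T.v_add d₁ d₂ hz₁ hz₂ hz))

lemma Pd_mul {d₁ d₂ : T.Δ} (h₁ : Pd T d₁) (h₂ : Pd T d₂) : Pd T (d₁ * d₂) := by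
  by_cases hz₁ : d₁ = 0
  · exact Or.inl (by rw [hz₁, zero_mul])
  by_cases hz₂ : d₂ = 0
  · exact Or.inl (by rw [hz₂, mul_zero])
  have hv₁ := h₁.resolve_left hz₁
  have hv₂ := h₂.resolve_left hz₂
  exact Or.inr (by rw [T.v_mul _ _ hz₁ hz₂]; exact add_pos hv₁ hv₂)

lemma v_one_add {d : T.Δ} (hd : d ≠ 0) (hv : 0 < T.v d) : T.v (1 + d) = 0 := by
  have h1 : (1 : T.Δ) + d ≠ 0 := one_add_ne_zero T (Or.inr hv)
  have hge : 0 ≤ T.v (1 + d) := by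
    have := T.v_add 1 d one_ne_zero hd h1
    rwa [v_one T, min_eq_left hv.le] at this
  have hle : T.v (1 + d) ≤ 0 := by
    by_contra hc
    push_neg at hc
    have hsum : (1 : T.Δ) + d + -d = 1 := add_neg_cancel_right 1 d
    have h2 : min (T.v (1 + d)) (T.v (-d)) ≤ T.v ((1 + d) + -d) :=
      T.v_add _ _ h1 (neg_ne_zero.mpr hd) (by rw [hsum]; exact one_ne_zero)
    rw [hsum, v_one T, v_neg T hd] at h2
    exact absurd h2 (not_le.mpr (lt_min hc hv))
  exact le_antisymm hle hge

lemma PS_one : PS T 1 := ⟨0, Or.inl rfl, by simp⟩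

lemma PS_mul {s₁ s₂ : T.Δˣ} (h₁ : PS T s₁) (h₂ : PS T s₂) : PS T (s₁ * s₂) := by
  obtain ⟨d₁, hd₁, hs₁⟩ := h₁
  obtain ⟨d₂, hd₂, hs₂⟩ := h₂
  refine ⟨d₁ + d₂ + d₁ * d₂, Pd_add T (Pd_add T hd₁ hd₂) (Pd_mul T hd₁ hd₂), ?_⟩
  rw [Units.val_mul, hs₁, hs₂]; noncomm_ring

lemma PS_conj (z : T.Δˣ) (s : T.Δˣ) (h : PS T s) : PS T (z * s * z⁻¹) := by
  obtain ⟨d, hd, hs⟩ := h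
  refine ⟨(z : T.Δ) * d * ((z⁻¹ : T.Δˣ) : T.Δ), ?_, ?_⟩
  · by_cases hz : d = 0
    · exact Or.inl (by rw [hz, mul_zero, zero_mul])
    have hv := hd.resolve_left hz
    have hz1 : ((z : T.Δˣ) : T.Δ) ≠ 0 := Units.ne_zero z
    have hz2 : ((z⁻¹ : T.Δˣ) : T.Δ) ≠ 0 := Units.ne_zero z⁻¹
    have hsum : T.v (z : T.Δ) + T.v ((z⁻¹ : T.Δˣ) : T.Δ) = 0 := by
      rw [← T.v_mul _ _ hz1 hz2, ← Units.val_mul, mul_inv_cancel, Units.val_one, v_one T]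
    refine Or.inr ?_
    rw [T.v_mul _ _ (mul_ne_zero hz1 hz) hz2, T.v_mul _ _ hz1 hz,
      add_right_comm, hsum, zero_add]
    exact hv
  · rw [Units.val_mul, Units.val_mul, hs, mul_add, mul_one, add_mul]
    congr 1
    rw [← Units.val_mul, mul_inv_cancel, Units.val_one]

lemma PS_inv {s : T.Δˣ} (h : PS T s) : PS T s⁻¹ := by
  obtain ⟨d, hd, hs⟩ := h
  by_cases hz : d = 0
  · have hs1 : s = 1 := Units.ext (by rw [hs, hz, add_zero, Units.val_one])
    rw [hs1, inv_one]; exact PS_one T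
  have hv := hd.resolve_left hz
  have hmul : ((s : T.Δˣ) : T.Δ) * ((s⁻¹ : T.Δˣ) : T.Δ) = 1 := by
    rw [← Units.val_mul, mul_inv_cancel, Units.val_one]
  have hw0 : ((s⁻¹ : T.Δˣ) : T.Δ) ≠ 0 := Units.ne_zero _
  have hvw : T.v ((s⁻¹ : T.Δˣ) : T.Δ) = 0 := by
    have h1 : T.v ((s : T.Δˣ) : T.Δ) + T.v ((s⁻¹ : T.Δˣ) : T.Δ) = 0 := by
      rw [← T.v_mul _ _ (Units.ne_zero s) hw0, hmul, v_one T]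
    rwa [hs, v_one_add T hz hv, zero_add] at h1
  refine ⟨-(d * ((s⁻¹ : T.Δˣ) : T.Δ)), ?_, ?_⟩
  · have hne : d * ((s⁻¹ : T.Δˣ) : T.Δ) ≠ 0 := mul_ne_zero hz hw0
    refine Or.inr ?_
    rw [v_neg T hne, T.v_mul _ _ hz hw0, hvw, add_zero]
    exact hv
  · rw [hs, add_mul, one_mul] at hmul
    exact (eq_sub_of_add_eq hmul).trans (sub_eq_add_neg _ _)

lemma ωu_center : T.ωu ∈ Subgroup.center T.Δˣ := by
  refine Subgroup.mem_center_iff.mpr fun g => Units.ext ?_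
  rw [Units.val_mul, Units.val_mul, T.hωu]
  exact (T.central ω (g : T.Δ)).symm

lemma factor_units (u : T.Δˣ) :
    ∃ (A : T.Δˣ) (α : Fin (2 * r) → ℤ) (s : T.Δˣ),
      A ∈ Subgroup.center T.Δˣ ∧ PS T s ∧ u = A * T.M α * s := by
  obtain ⟨a, α, d, hd, he⟩ := T.factor u
  have ha : a ≠ 0 := by
    rintro rfl
    apply Units.ne_zero u
    rw [he, map_zero, zero_mul, zero_mul]
  refine ⟨⟨T.ι a, T.ι a⁻¹, ?_, ?_⟩, α, Units.mk0 (1 + d) (one_add_ne_zero T hd),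
    ?_, ⟨d, hd, rfl⟩, ?_⟩
  · rw [← map_mul, mul_inv_cancel₀ ha, map_one]
  · rw [← map_mul, inv_mul_cancel₀ ha, map_one]
  · refine Subgroup.mem_center_iff.mpr fun g => Units.ext ?_
    rw [Units.val_mul, Units.val_mul]
    exact (T.central a (g : T.Δ)).symm
  · exact Units.ext (by rw [Units.val_mul, Units.val_mul]; exact he)

lemma central_conj_cancel {G : Type*} [Group G] {z : G} (hz : z ∈ Subgroup.center G)
    (x y : G) : (z * x) * (z * y)⁻¹ = x * y⁻¹ := by
  have h := Subgroup.mem_center_iff.mp hz (x * y⁻¹)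
  calc (z * x) * (z * y)⁻¹ = z * (x * y⁻¹) * z⁻¹ := by group
    _ = (x * y⁻¹) * z * z⁻¹ := by rw [h]
    _ = x * y⁻¹ := by group

lemma central_cancel {G : Type*} [Group G] {z₁ z₂ : G}
    (h₁ : z₁ ∈ Subgroup.center G) (h₂ : z₂ ∈ Subgroup.center G) (w w' : G) :
    (z₁ * w) * (z₂ * w')⁻¹ = (z₁ * z₂⁻¹) * (w * w'⁻¹) := by
  have hz2 := Subgroup.mem_center_iff.mp (Subgroup.inv_mem _ h₂) (w * w'⁻¹)
  calc (z₁ * w) * (z₂ * w')⁻¹ = z₁ * ((w * w'⁻¹) * z₂⁻¹) := by group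
    _ = z₁ * (z₂⁻¹ * (w * w'⁻¹)) := by rw [hz2]
    _ = (z₁ * z₂⁻¹) * (w * w'⁻¹) := by rw [mul_assoc]

/-- The subgroup `⟨ω_m⟩ · (1 + M_Δ)` of `Δˣ`. -/
def Nsub : Subgroup T.Δˣ where
  carrier := {u | ∃ (e : ℤ) (s : T.Δˣ), PS T s ∧ u = T.ωu ^ e * s}
  one_mem' := ⟨0, 1, PS_one T, by rw [zpow_zero, one_mul]⟩
  mul_mem' := by
    rintro u₁ u₂ ⟨e₁, s₁, hs₁, rfl⟩ ⟨e₂, s₂, hs₂, rfl⟩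
    refine ⟨e₁ + e₂, s₁ * s₂, PS_mul T hs₁ hs₂, ?_⟩
    have hc := Subgroup.mem_center_iff.mp
      (Subgroup.zpow_mem _ (ωu_center T) e₂) s₁
    calc T.ωu ^ e₁ * s₁ * (T.ωu ^ e₂ * s₂)
        = T.ωu ^ e₁ * (s₁ * T.ωu ^ e₂) * s₂ := by group
      _ = T.ωu ^ e₁ * (T.ωu ^ e₂ * s₁) * s₂ := by rw [hc]
      _ = T.ωu ^ (e₁ + e₂) * (s₁ * s₂) := by rw [zpow_add]; group
  inv_mem' := by
    rintro u ⟨e, s, hs, rfl⟩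
    refine ⟨-e, s⁻¹, PS_inv T hs, ?_⟩
    have hc := Subgroup.mem_center_iff.mp
      (Subgroup.zpow_mem _ (ωu_center T) (-e)) s⁻¹
    rw [mul_inv_rev, ← zpow_neg, hc]

lemma mul_factor (A₁ A₂ : T.Δˣ) (hA₂ : A₂ ∈ Subgroup.center T.Δˣ)
    (α β : Fin (2 * r) → ℤ) (s₁ s₂ : T.Δˣ) (h₁ : PS T s₁) (h₂ : PS T s₂) :
    ∃ (e : ℤ) (t : T.Δˣ), PS T t ∧
      (A₁ * T.M α * s₁) * (A₂ * T.M β * s₂)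
        = (A₁ * A₂) * (T.ωu ^ e * (T.M (α + β) * t)) := by
  obtain ⟨e, he⟩ := T.M_twist α β
  have ht : PS T ((T.M β)⁻¹ * s₁ * T.M β * s₂) := by
    have := PS_mul T (PS_conj T (T.M β)⁻¹ s₁ h₁) h₂
    rwa [inv_inv] at this
  refine ⟨e, (T.M β)⁻¹ * s₁ * T.M β * s₂, ht, ?_⟩
  have hA := Subgroup.mem_center_iff.mp hA₂
  calc (A₁ * T.M α * s₁) * (A₂ * T.M β * s₂)
      = (A₁ * T.M α * s₁) * A₂ * (T.M β * s₂) := by group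
    _ = A₂ * (A₁ * T.M α * s₁) * (T.M β * s₂) := by rw [hA]
    _ = (A₂ * A₁) * ((T.M α * T.M β) * ((T.M β)⁻¹ * s₁ * T.M β * s₂)) := by group
    _ = (A₁ * A₂) * ((T.M α * T.M β) * ((T.M β)⁻¹ * s₁ * T.M β * s₂)) := by rw [← hA A₁]
    _ = (A₁ * A₂) * (T.ωu ^ e * (T.M (α + β) * ((T.M β)⁻¹ * s₁ * T.M β * s₂))) := by
        rw [he]; group

open scoped commutatorElement in
lemma commutator_mem (g h : T.Δˣ) : ⁅g, h⁆ ∈ Nsub T := by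
  obtain ⟨A₁, α, s₁, hA₁, hs₁, hg⟩ := factor_units T g
  obtain ⟨A₂, β, s₂, hA₂, hs₂, hh⟩ := factor_units T h
  obtain ⟨e₁, t₁, ht₁, hgh⟩ := mul_factor T A₁ A₂ hA₂ α β s₁ s₂ hs₁ hs₂
  obtain ⟨e₂, t₂, ht₂, hhg⟩ := mul_factor T A₂ A₁ hA₁ β α s₂ s₁ hs₂ hs₁
  have hA := Subgroup.mem_center_iff.mp hA₂ A₁
  rw [add_comm β α, ← hA] at hhg
  refine ⟨e₁ - e₂, T.M (α + β) * (t₁ * t₂⁻¹) * (T.M (α + β))⁻¹,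
    PS_conj T _ _ (PS_mul T ht₁ (PS_inv T ht₂)), ?_⟩
  have hc : ⁅g, h⁆ = (g * h) * (h * g)⁻¹ := by
    rw [commutatorElement_def]; group
  rw [hc, hg, hh, hgh, hhg]
  have hz₁ : (A₁ * A₂) * T.ωu ^ e₁ ∈ Subgroup.center T.Δˣ :=
    Subgroup.mul_mem _ (Subgroup.mul_mem _ hA₁ hA₂)
      (Subgroup.zpow_mem _ (ωu_center T) e₁)
  have hz₂ : (A₁ * A₂) * T.ωu ^ e₂ ∈ Subgroup.center T.Δˣ :=
    Subgroup.mul_mem _ (Subgroup.mul_mem _ hA₁ hA₂)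
      (Subgroup.zpow_mem _ (ωu_center T) e₂)
  calc (A₁ * A₂) * (T.ωu ^ e₁ * (T.M (α + β) * t₁))
        * ((A₁ * A₂) * (T.ωu ^ e₂ * (T.M (α + β) * t₂)))⁻¹
      = ((A₁ * A₂) * T.ωu ^ e₁ * (T.M (α + β) * t₁))
        * ((A₁ * A₂) * T.ωu ^ e₂ * (T.M (α + β) * t₂))⁻¹ := by group
    _ = ((A₁ * A₂) * T.ωu ^ e₁ * ((A₁ * A₂) * T.ωu ^ e₂)⁻¹)
        * ((T.M (α + β) * t₁) * (T.M (α + β) * t₂)⁻¹) :=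
        central_cancel hz₁ hz₂ _ _
    _ = (T.ωu ^ e₁ * (T.ωu ^ e₂)⁻¹)
        * ((T.M (α + β) * t₁) * (T.M (α + β) * t₂)⁻¹) := by
        rw [central_conj_cancel (Subgroup.mul_mem _ hA₁ hA₂)]
    _ = T.ωu ^ (e₁ - e₂) * (T.M (α + β) * (t₁ * t₂⁻¹) * (T.M (α + β))⁻¹) := by
        rw [zpow_sub]; group

end Aux

/-- The commutator subgroup of `Δ*` for the iterated twisted Laurent
series division ring `Δ = Δ_{2r}(k; n₁,…,n_r)` is contained in `⟨ω_m⟩·(1 + M_Δ)`, where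
`M_Δ = {g : v(g) > 0}`. -/
theorem commutator_subgroup_bound (k : Type*) [Field k] (r m : ℕ) (hm : 0 < m)
    (ω : k) (hω : IsPrimitiveRoot ω m) (T : TwistedLaurentValuedModel k r ω) :
    ∀ u : T.Δˣ, u ∈ commutator T.Δˣ →
      ∃ (e : ℤ) (d : T.Δ), (d = 0 ∨ 0 < T.v d) ∧
        (u : T.Δ) = ((T.ωu ^ e : T.Δˣ) : T.Δ) * (1 + d) := by
  intro u hu
  have hle : commutator T.Δˣ ≤ Nsub T := by
    rw [commutator_def]
    exact Subgroup.commutator_le.mpr fun g _ h _ => commutator_mem T g h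
  obtain ⟨e, s, ⟨d, hd, hs⟩, hu'⟩ := hle hu
  exact ⟨e, d, hd, by rw [hu', Units.val_mul, hs]⟩

end AmitsurNote
end
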